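/- Under the (A,B) signGD dynamics, suppose that at some time t one has a/3 < |A(t)| < 2a/3 and |B(t)| < min(|A(t)|, a − |A(t)|) (the stationary subpartition R₂₂). Then for every i ∈ ℕ: A(t + 2i) = A(t), A(t + 2i + 1) = A(t) − sgn(A(t))·a, and B(t') = B(t) for all t' ≥ t; in particular A(t') alternates sign with period 2 and |A(t')| ≤ 2a/3 for all t' ≥ t, while B remains constant. -/
import Mathlib


/-- The frequency-domain `(A,B)` signGD error dynamics with `a = σ₀²η`, `b = σ₁²η`:
`A(t+1) = A(t) − (a/3)(sgn(A+B) + sgn(A) + sgn(A−B))` and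
`B(t+1) = B(t) − (b/2)(sgn(A+B) − sgn(A−B))`. -/
def SignGDDyn (σ0sq σ1sq η : ℝ) (A B : ℕ → ℝ) : Prop :=
  (∀ t, A (t+1) = A t - σ0sq * η / 3 *
      (Real.sign (A t + B t) + Real.sign (A t) + Real.sign (A t - B t))) ∧
  (∀ t, B (t+1) = B t - σ1sq * η / 2 *
      (Real.sign (A t + B t) - Real.sign (A t - B t)))

lemma signGD_step_pos (σ0sq σ1sq η : ℝ) (A B : ℕ → ℝ)
    (hdyn : SignGDDyn σ0sq σ1sq η A B) (u : ℕ)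
    (hApos : 0 < A u) (hB1 : |B u| < A u) :
    A (u+1) = A u - σ0sq * η ∧ B (u+1) = B u := by
  obtain ⟨hb1, hb2⟩ := abs_lt.mp hB1
  have hs1 : Real.sign (A u + B u) = 1 := Real.sign_of_pos (by linarith)
  have hs2 : Real.sign (A u) = 1 := Real.sign_of_pos hApos
  have hs3 : Real.sign (A u - B u) = 1 := Real.sign_of_pos (by linarith)
  constructor
  · rw [hdyn.1 u, hs1, hs2, hs3]; ring
  · rw [hdyn.2 u, hs1, hs3]; ring

lemma signGD_step_neg (σ0sq σ1sq η : ℝ) (A B : ℕ → ℝ)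
    (hdyn : SignGDDyn σ0sq σ1sq η A B) (u : ℕ)
    (hAneg : A u < 0) (hB1 : |B u| < -(A u)) :
    A (u+1) = A u + σ0sq * η ∧ B (u+1) = B u := by
  obtain ⟨hb1, hb2⟩ := abs_lt.mp hB1
  have hs1 : Real.sign (A u + B u) = -1 := Real.sign_of_neg (by linarith)
  have hs2 : Real.sign (A u) = -1 := Real.sign_of_neg hAneg
  have hs3 : Real.sign (A u - B u) = -1 := Real.sign_of_neg (by linarith)
  constructor
  · rw [hdyn.1 u, hs1, hs2, hs3]; ring
  · rw [hdyn.2 u, hs1, hs3]; ring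

/-- In the stationary subpartition `R₂₂`
(`a/3 < |A(t)| < 2a/3` and `|B(t)| < min(|A(t)|, a − |A(t)|)`): `A` is
2-periodic, alternating between `A(t)` and `A(t) − sgn(A(t))·a` with alternating
signs and `|A(t')| ≤ 2a/3`, while `B` stays constant, for all later times. -/
theorem signGD_stationary_R22 (σ0sq σ1sq η : ℝ)
    (h0 : 0 < σ0sq) (h1 : 0 < σ1sq) (hη : 0 < η)
    (A B : ℕ → ℝ) (hdyn : SignGDDyn σ0sq σ1sq η A B) (t : ℕ)
    (hA_lo : σ0sq * η / 3 < |A t|) (hA_hi : |A t| < 2 * (σ0sq * η) / 3)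
    (hB : |B t| < min (|A t|) (σ0sq * η - |A t|)) :
    (∀ i : ℕ, A (t + 2*i) = A t ∧
      A (t + 2*i + 1) = A t - Real.sign (A t) * (σ0sq * η)) ∧
    (∀ t' ≥ t, B t' = B t) ∧
    (∀ i : ℕ, Real.sign (A (t + 2*i + 1)) = - Real.sign (A (t + 2*i))) ∧
    (∀ t' ≥ t, |A t'| ≤ 2 * (σ0sq * η) / 3) := by
  set a := σ0sq * η with ha
  have ha0 : 0 < a := mul_pos h0 hη
  obtain ⟨hB1, hB2⟩ := lt_min_iff.mp hB
  have hAne : A t ≠ 0 := by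
    intro h; rw [h, abs_zero] at hA_lo; linarith
  -- main invariant, including B
  have key : ∀ i : ℕ, A (t + 2*i) = A t ∧
      A (t + 2*i + 1) = A t - Real.sign (A t) * a ∧
      B (t + 2*i) = B t ∧ B (t + 2*i + 1) = B t := by
    rcases hAne.lt_or_gt with hneg | hpos
    · -- A t < 0
      have habs : |A t| = -(A t) := abs_of_neg hneg
      have hs : Real.sign (A t) = -1 := Real.sign_of_neg hneg
      rw [habs] at hA_lo hA_hi hB1 hB2
      have step1 : ∀ u : ℕ, A u = A t → B u = B t →
          A (u+1) = A t + a ∧ B (u+1) = B t := by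
        intro u hAu hBu
        have := signGD_step_neg σ0sq σ1sq η A B hdyn u
          (by rw [hAu]; exact hneg) (by rw [hAu, hBu]; exact hB1)
        rw [hAu, hBu] at this; exact this
      have step2 : ∀ u : ℕ, A u = A t + a → B u = B t →
          A (u+1) = A t ∧ B (u+1) = B t := by
        intro u hAu hBu
        have := signGD_step_pos σ0sq σ1sq η A B hdyn u
          (by rw [hAu]; linarith) (by rw [hAu, hBu]; linarith)
        rw [hAu, hBu] at this
        refine ⟨by linarith [this.1], this.2⟩
      intro i
      induction i with
      | zero =>
        have h1 := step1 t rfl rfl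
        refine ⟨rfl, ?_, rfl, ?_⟩
        · rw [hs]; show A (t+1) = _; rw [h1.1]; ring
        · exact h1.2
      | succ n ih =>
        obtain ⟨_, hAo, _, hBo⟩ := ih
        rw [hs] at hAo
        have hAo' : A (t + 2*n + 1) = A t + a := by rw [hAo]; ring
        have heq : t + 2*(n+1) = (t + 2*n + 1) + 1 := by ring
        have h2 := step2 (t + 2*n + 1) hAo' hBo
        rw [← heq] at h2
        have h1 := step1 (t + 2*(n+1)) h2.1 h2.2
        refine ⟨h2.1, ?_, h2.2, h1.2⟩
        rw [hs]; simpa using h1.1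
    · -- 0 < A t
      have habs : |A t| = A t := abs_of_pos hpos
      have hs : Real.sign (A t) = 1 := Real.sign_of_pos hpos
      rw [habs] at hA_lo hA_hi hB1 hB2
      have step1 : ∀ u : ℕ, A u = A t → B u = B t →
          A (u+1) = A t - a ∧ B (u+1) = B t := by
        intro u hAu hBu
        have := signGD_step_pos σ0sq σ1sq η A B hdyn u
          (by rw [hAu]; exact hpos) (by rw [hAu, hBu]; exact hB1)
        rw [hAu, hBu] at this; exact this
      have step2 : ∀ u : ℕ, A u = A t - a → B u = B t →
          A (u+1) = A t ∧ B (u+1) = B t := by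
        intro u hAu hBu
        have := signGD_step_neg σ0sq σ1sq η A B hdyn u
          (by rw [hAu]; linarith) (by rw [hAu, hBu]; rw [neg_sub]; linarith)
        rw [hAu, hBu] at this
        refine ⟨by linarith [this.1], this.2⟩
      intro i
      induction i with
      | zero =>
        have h1 := step1 t rfl rfl
        refine ⟨rfl, ?_, rfl, ?_⟩
        · rw [hs]; show A (t+1) = _; rw [h1.1]; ring
        · exact h1.2
      | succ n ih =>
        obtain ⟨_, hAo, _, hBo⟩ := ih
        rw [hs] at hAo
        have hAo' : A (t + 2*n + 1) = A t - a := by rw [hAo]; ring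
        have heq : t + 2*(n+1) = (t + 2*n + 1) + 1 := by ring
        have h2 := step2 (t + 2*n + 1) hAo' hBo
        rw [← heq] at h2
        have h1 := step1 (t + 2*(n+1)) h2.1 h2.2
        refine ⟨h2.1, ?_, h2.2, h1.2⟩
        rw [hs]; simpa using h1.1
  -- helper: every t' ≥ t has form t + 2i or t + 2i + 1
  have decomp : ∀ t' ≥ t, (∃ i, t' = t + 2*i) ∨ (∃ i, t' = t + 2*i + 1) := by
    intro t' ht'
    rcases Nat.even_or_odd (t' - t) with ⟨i, hi⟩ | ⟨i, hi⟩
    · exact Or.inl ⟨i, by omega⟩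
    · exact Or.inr ⟨i, by omega⟩
  refine ⟨fun i => ⟨(key i).1, (key i).2.1⟩, ?_, ?_, ?_⟩
  · intro t' ht'
    rcases decomp t' ht' with ⟨i, rfl⟩ | ⟨i, rfl⟩
    · exact (key i).2.2.1
    · exact (key i).2.2.2
  · intro i
    obtain ⟨he, ho, _, _⟩ := key i
    rw [he, ho]
    rcases hAne.lt_or_gt with hneg | hpos
    · have hs : Real.sign (A t) = -1 := Real.sign_of_neg hneg
      have habs : |A t| = -(A t) := abs_of_neg hneg
      rw [habs] at hA_hi
      rw [hs, Real.sign_of_pos (by linarith)]; norm_num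
    · have hs : Real.sign (A t) = 1 := Real.sign_of_pos hpos
      have habs : |A t| = A t := abs_of_pos hpos
      rw [habs] at hA_hi
      rw [hs, Real.sign_of_neg (by linarith)]
  · intro t' ht'
    rcases decomp t' ht' with ⟨i, rfl⟩ | ⟨i, rfl⟩
    · rw [(key i).1]; exact le_of_lt hA_hi
    · rw [(key i).2.1]
      rcases hAne.lt_or_gt with hneg | hpos
      · have hs : Real.sign (A t) = -1 := Real.sign_of_neg hneg
        have habs : |A t| = -(A t) := abs_of_neg hneg
        rw [habs] at hA_lo hA_hi
        rw [hs, abs_of_pos (by linarith)]; linarith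
      · have hs : Real.sign (A t) = 1 := Real.sign_of_pos hpos
        have habs : |A t| = A t := abs_of_pos hpos
        rw [habs] at hA_lo hA_hi
        rw [hs, abs_of_neg (by linarith)]; linarith
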